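/- arXiv:2408.07309 — 2 statements merged into one kernel-verified Lean document; each statement's English description precedes it below -/
import Mathlib

section
/- Let a ≥ 3 be an integer, d = a² − 4 (more generally any positive real with √d = ε − ε⁻¹), ε = (a + √d)/2, and define τ_n = (T_{n+1}(a) + i√d)/T_n(a) in the upper half plane. Let U = [[a,−1],[1,0]] act on the upper half plane by Möbius transformations. Then for all integers n and k, U^k · τ_n = τ_{n+2k}. -/
open Complex

/-- The normalized Chebyshev polynomial of the first kind (indexed by `ℤ`, with
`T (-n) = T n`), characterized by `T n (X + X⁻¹) = X ^ n + X ^ (-n)`. -/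
noncomputable def chebT (n : ℤ) (x : ℝ) : ℝ :=
  2 * (Polynomial.Chebyshev.T ℝ n).eval (x / 2)

/-- Möbius action of a real 2×2 matrix `[[p,q],[r,s]]` on `τ`: `(pτ+q)/(rτ+s)`. -/
noncomputable def moebius (M : Matrix (Fin 2) (Fin 2) ℝ) (τ : ℂ) : ℂ :=
  ((M 0 0 : ℂ) * τ + (M 0 1 : ℂ)) / ((M 1 0 : ℂ) * τ + (M 1 1 : ℂ))

set_option maxHeartbeats 1600000 in
theorem U_zpow_moebius_tau (a : ℤ) (ha : 3 ≤ a) (d : ℝ) (hd : d = (a : ℝ) ^ 2 - 4)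
    (U : Matrix (Fin 2) (Fin 2) ℝ) (hU : U = !![(a : ℝ), -1; 1, 0])
    (τ : ℤ → ℂ)
    (hτ : ∀ n : ℤ, τ n = ((chebT (n + 1) (a : ℝ) : ℂ) + Complex.I * (Real.sqrt d : ℂ))
      / (chebT n (a : ℝ) : ℂ)) (n k : ℤ) :
    moebius (U ^ k) (τ n) = τ (n + 2 * k) := by
  have ha3 : (3:ℝ) ≤ (a:ℝ) := by exact_mod_cast ha
  have hd0 : 0 < d := by nlinarith
  set s : ℝ := Real.sqrt d with hs
  have hs0 : 0 < s := Real.sqrt_pos.mpr hd0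
  have hsne : s ≠ 0 := ne_of_gt hs0
  have hssq : s^2 = d := Real.sq_sqrt hd0.le
  set e : ℝ := ((a:ℝ) + s)/2 with he
  have he0 : 0 < e := by positivity
  have hene : e ≠ 0 := ne_of_gt he0
  have heinv : e⁻¹ = ((a:ℝ) - s)/2 := by
    refine inv_eq_of_mul_eq_one_right ?_
    rw [he]; nlinarith [hssq]
  have hsum : e + e⁻¹ = (a:ℝ) := by rw [heinv, he]; ring
  have hdiff : e - e⁻¹ = s := by rw [heinv, he]; ring
  have he1 : 1 < e := by rw [he]; nlinarith
  have Hrec : ∀ m : ℤ, e^(m+2) + e^(-(m+2)) = (a:ℝ)*(e^(m+1) + e^(-(m+1))) - (e^m + e^(-m)) := by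
    intro m
    rw [← hsum]
    simp only [show (2:ℤ) = 1+1 from by norm_num, zpow_add₀ hene, zpow_neg, zpow_one]
    field_simp
    ring
  have cheb_rec : ∀ m : ℤ, chebT (m+2) (a:ℝ) = (a:ℝ) * chebT (m+1) (a:ℝ) - chebT m (a:ℝ) := by
    intro m
    unfold chebT
    rw [Polynomial.Chebyshev.T_add_two]
    simp [Polynomial.eval_mul, Polynomial.eval_sub]
    ring
  have cheb_eq : ∀ m : ℤ, chebT m (a:ℝ) = e^m + e^(-m) := by
    suffices h : ∀ m : ℤ, chebT m (a:ℝ) = e^m + e^(-m) ∧ chebT (m+1) (a:ℝ) = e^(m+1) + e^(-(m+1)) by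
      exact fun m => (h m).1
    intro m
    induction m using Int.induction_on with
    | zero =>
      constructor
      · simp [chebT, Polynomial.Chebyshev.T_zero]; norm_num
      · simp [chebT, Polynomial.Chebyshev.T_one, zpow_one, ← hsum, zpow_neg]; ring
    | succ i ih =>
      refine ⟨ih.2, ?_⟩
      have h2 : ((i:ℤ)+1)+1 = i+2 := by ring
      rw [h2, cheb_rec, Hrec, ih.1, ih.2]
    | pred i ih =>
      have h2 : (-(i:ℤ)-1)+1 = -i := by ring
      refine ⟨?_, by rw [h2]; exact ih.1⟩
      have hr := cheb_rec (-(i:ℤ)-1)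
      have hH := Hrec (-(i:ℤ)-1)
      have e1 : (-(i:ℤ)-1)+2 = -i+1 := by ring
      have e2 : (-(i:ℤ)-1)+1 = -i := by ring
      rw [e1, e2] at hr hH
      rw [ih.1, ih.2] at hr
      linarith [hr, hH]
  -- the matrix power formula
  set G : ℤ → ℝ := fun m => (e^m - e^(-m))/s with hG
  have hG0 : G 0 = 0 := by simp [hG]
  have hG1 : G 1 = 1 := by
    rw [hG]; show (e^(1:ℤ) - e^(-1:ℤ))/s = 1
    rw [zpow_one, zpow_neg, zpow_one, hdiff, div_self hsne]
  have hGm1 : G (-1) = -1 := by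
    rw [hG]; show (e^(-1:ℤ) - e^(-(-1):ℤ))/s = -1
    rw [show -(-1:ℤ) = 1 from rfl, zpow_one, zpow_neg, zpow_one,
      show e⁻¹ - e = -s from by rw [← hdiff]; ring, neg_div, div_self hsne]
  have Grec : ∀ m : ℤ, G (m+2) = (a:ℝ) * G (m+1) - G m := by
    intro m
    rw [hG, ← hsum]
    show (e^(m+2) - e^(-(m+2)))/s = _
    simp only [show (2:ℤ) = 1+1 from by norm_num, zpow_add₀ hene, zpow_neg, zpow_one]
    field_simp
    ring
  have hdet : IsUnit U.det := by
    rw [hU, Matrix.det_fin_two_of]; norm_num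
  have hUinv : U⁻¹ = !![0, 1; -1, (a:ℝ)] := by
    apply Matrix.inv_eq_right_inv
    rw [hU, Matrix.mul_fin_two, Matrix.one_fin_two]
    norm_num
  have hUk : ∀ k : ℤ, U ^ k = !![G (k+1), -G k; G k, -G (k-1)] := by
    intro k
    induction k using Int.induction_on with
    | zero =>
      rw [zpow_zero, Matrix.one_fin_two]
      norm_num [hG1, hG0, hGm1]
    | succ i ih =>
      have hA : G ((i:ℤ)+2) = (a:ℝ)*G (i+1) - G i := Grec i
      have hB : G ((i:ℤ)+1) = (a:ℝ)*G i - G (i-1) := by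
        have h := Grec ((i:ℤ)-1)
        rw [show (i:ℤ)-1+2 = i+1 from by ring, show (i:ℤ)-1+1 = (i:ℤ) from by ring] at h
        exact h
      rw [Matrix.zpow_add_one hdet, ih, hU, Matrix.mul_fin_two,
        show (i:ℤ)+1+1 = i+2 from by ring, show (i:ℤ)+1-1 = (i:ℤ) from by ring, hA, hB]
      ext x y
      fin_cases x <;> fin_cases y <;> simp <;> ring
    | pred i ih =>
      have hA : G (-(i:ℤ)+1) = (a:ℝ)*G (-i) - G (-i-1) := by
        have h := Grec (-(i:ℤ)-1)
        rw [show -(i:ℤ)-1+2 = -i+1 from by ring, show -(i:ℤ)-1+1 = -(i:ℤ) from by ring] at h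
        exact h
      have hB : G (-(i:ℤ)) = (a:ℝ)*G (-i-1) - G (-i-2) := by
        have h := Grec (-(i:ℤ)-2)
        rw [show -(i:ℤ)-2+2 = -(i:ℤ) from by ring, show -(i:ℤ)-2+1 = -(i:ℤ)-1 from by ring] at h
        exact h
      rw [show (-(i:ℤ) - 1) = (-(i:ℤ)) - 1 from rfl, Matrix.zpow_sub_one hdet, ih, hUinv,
        Matrix.mul_fin_two, show -(i:ℤ)-1+1 = -(i:ℤ) from by ring,
        show -(i:ℤ)-1-1 = -(i:ℤ)-2 from by ring, hA, hB]
      ext x y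
      fin_cases x <;> fin_cases y <;> simp <;> ring
  -- rewrite the goal
  rw [hτ n, hτ (n + 2*k), hUk k]
  simp only [cheb_eq, hG]
  -- final computation
  have hxne : e^n ≠ 0 := zpow_ne_zero _ hene
  have hyne : e^k ≠ 0 := zpow_ne_zero _ hene
  have hv0 : (0:ℝ) < e^n + e^(-n) := by positivity
  have hz0 : (0:ℝ) < e^(n+2*k) + e^(-(n+2*k)) := by positivity
  have himp : (e^k - e^(-k)) = 0 → (e^(k-1) - e^(-(k-1))) ≠ 0 := by
    intro h0 h1
    have hek : e^k = e^(-k) := by linarith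
    have hk0 : k = 0 := by
      have := zpow_right_injective₀ he0 he1.ne' hek
      omega
    rw [hk0] at h1
    simp only [zero_sub, neg_neg, zpow_neg, zpow_one] at h1
    have he' : e⁻¹ = e := by linarith
    rw [he'] at hdiff
    simp at hdiff
    exact hsne hdiff.symm
  have R1q : ((e^(k+1)-e^(-(k+1)))*(e^(n+1) + e^(-(n+1))) - (e^k-e^(-k))*(e^n + e^(-n)))*(e^(n+2*k) + e^(-(n+2*k)))
      = (e^(n+2*k+1) + e^(-(n+2*k+1)))*((e^k-e^(-k))*(e^(n+1) + e^(-(n+1))) - (e^(k-1)-e^(-(k-1)))*(e^n + e^(-n)))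
        - ((e^k-e^(-k))*s)*s := by
    rw [← hdiff]
    simp only [two_mul, zpow_add₀ hene, zpow_sub₀ hene, zpow_neg, zpow_one]
    field_simp [hxne, hyne]
    ring
  have R2q : (e^(k+1)-e^(-(k+1))) * (e^(n+2*k) + e^(-(n+2*k)))
      = ((e^k-e^(-k))*(e^(n+1) + e^(-(n+1))) - (e^(k-1)-e^(-(k-1)))*(e^n + e^(-n)))
        + (e^(n+2*k+1) + e^(-(n+2*k+1)))*(e^k-e^(-k)) := by
    simp only [two_mul, zpow_add₀ hene, zpow_sub₀ hene, zpow_neg, zpow_one]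
    field_simp [hxne, hyne]
    ring
  generalize hq1 : e^(k+1) - e^(-(k+1)) = q1 at R1q R2q ⊢
  generalize hq0 : e^k - e^(-k) = q0 at R1q R2q himp ⊢
  generalize hqm : e^(k-1) - e^(-(k-1)) = qm at R1q R2q himp ⊢
  generalize hUu : e^(n+1) + e^(-(n+1)) = u at R1q R2q ⊢
  generalize hVv : e^n + e^(-n) = v at R1q R2q hv0 ⊢
  generalize hWw : e^(n+2*k+1) + e^(-(n+2*k+1)) = w at R1q R2q ⊢
  generalize hZz : e^(n+2*k) + e^(-(n+2*k)) = z at R1q R2q hz0 ⊢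
  have hvC : ((v:ℝ):ℂ) ≠ 0 := by exact_mod_cast ne_of_gt hv0
  have hzC : ((z:ℝ):ℂ) ≠ 0 := by exact_mod_cast ne_of_gt hz0
  have hsC : ((s:ℝ):ℂ) ≠ 0 := by exact_mod_cast hsne
  have hsvC : ((s:ℝ):ℂ) * ((v:ℝ):ℂ) ≠ 0 := mul_ne_zero hsC hvC
  rw [moebius]
  simp only [Matrix.cons_val', Matrix.cons_val_zero, Matrix.cons_val_one, Matrix.head_cons,
    Matrix.empty_val', Matrix.cons_val_fin_one, Matrix.head_fin_const, Matrix.of_apply]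
  have hnum : ((q1/s : ℝ):ℂ) * ((((u:ℝ):ℂ) + Complex.I * (s:ℂ)) / ((v:ℝ):ℂ)) + ((-(q0/s) : ℝ):ℂ)
      = (((q1:ℝ):ℂ) * (((u:ℝ):ℂ) + Complex.I * (s:ℂ)) - ((q0:ℝ):ℂ) * ((v:ℝ):ℂ)) / (((s:ℝ):ℂ) * ((v:ℝ):ℂ)) := by
    push_cast
    field_simp
    ring
  have hden : ((q0/s : ℝ):ℂ) * ((((u:ℝ):ℂ) + Complex.I * (s:ℂ)) / ((v:ℝ):ℂ)) + ((-(qm/s) : ℝ):ℂ)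
      = (((q0:ℝ):ℂ) * (((u:ℝ):ℂ) + Complex.I * (s:ℂ)) - ((qm:ℝ):ℂ) * ((v:ℝ):ℂ)) / (((s:ℝ):ℂ) * ((v:ℝ):ℂ)) := by
    push_cast
    field_simp
    ring
  have hBC : (((q0:ℝ):ℂ) * (((u:ℝ):ℂ) + Complex.I * (s:ℂ)) - ((qm:ℝ):ℂ) * ((v:ℝ):ℂ)) ≠ 0 := by
    intro h
    rw [Complex.ext_iff] at h
    simp [Complex.mul_re, Complex.mul_im] at h
    obtain ⟨hre, him⟩ := h
    have hq00 : q0 = 0 := by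
      rcases him with h' | h'
      · exact h'
      · exact absurd h' hsne
    have : qm * v = 0 := by rw [hq00] at hre; linarith
    rcases mul_eq_zero.mp this with h' | h'
    · exact himp hq00 h'
    · exact absurd h' (ne_of_gt hv0)
  rw [hnum, hden, div_div_div_cancel_right₀ hsvC, div_eq_div_iff hBC hzC]
  rw [Complex.ext_iff]
  constructor
  · simp [Complex.mul_re, Complex.mul_im]
    linear_combination R1q
  · simp [Complex.mul_re, Complex.mul_im]
    linear_combination s * R2q
end

section
/- Let a ≥ 3 be an integer and let (x_k, y_k) ∈ (0,1] × [0,1) be a sequence of pairs of rationals satisfying x_{k+1} = ⟨a·x_k + y_k⟩ and y_{k+1} = 1 − x_k, where ⟨r⟩ denotes the unique representative of r mod ℤ in (0,1]. If for some g ≥ 1 the transposed matrix relation (U^T)^g (x_k, y_k)^T ≡ (x_k, y_k)^T (mod ℤ componentwise, with the representative conventions x ∈ (0,1], y ∈ [0,1)) holds for k = 0, then the sequence (x_k, y_k) is periodic with period g: (x_{k+g}, y_{k+g}) = (x_k, y_k) for all k ≥ 0. -/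
/-- `⟨r⟩` is the unique representative of `r` mod `ℤ` lying in `(0, 1]`,
namely `⟨r⟩ = r - ⌈r⌉ + 1`. -/
def upperFract (r : ℚ) : ℚ := r - ⌈r⌉ + 1

theorem shintani_datum_periodic (a : ℤ) (ha : 3 ≤ a) (x y : ℕ → ℚ)
    (hx_mem : ∀ k, x k ∈ Set.Ioc (0 : ℚ) 1) (hy_mem : ∀ k, y k ∈ Set.Ico (0 : ℚ) 1)
    (hx : ∀ k, x (k + 1) = upperFract ((a : ℚ) * x k + y k))
    (hy : ∀ k, y (k + 1) = 1 - x k)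
    (g : ℕ) (hg : 1 ≤ g)
    (hfix : ∃ p q : ℤ,
      ((!![(a : ℚ), 1; -1, 0]) ^ g).mulVec ![x 0, y 0] = ![x 0 + p, y 0 + q]) :
    ∀ k : ℕ, x (k + g) = x k ∧ y (k + g) = y k := by
  set M : Matrix (Fin 2) (Fin 2) ℚ := !![(a : ℚ), 1; -1, 0] with hM
  have key : ∀ k, (∃ m : ℤ, x k = ((M ^ k).mulVec ![x 0, y 0]) 0 + m) ∧
      (∃ n : ℤ, y k = ((M ^ k).mulVec ![x 0, y 0]) 1 + n) := by
    intro k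
    induction k with
    | zero =>
      refine ⟨⟨0, ?_⟩, ⟨0, ?_⟩⟩ <;> simp
    | succ k ih =>
      obtain ⟨⟨m, hm⟩, ⟨n, hn⟩⟩ := ih
      have hpow : (M ^ (k + 1)).mulVec ![x 0, y 0]
          = M.mulVec ((M ^ k).mulVec ![x 0, y 0]) := by
        rw [pow_succ', ← Matrix.mulVec_mulVec]
      set u := (M ^ k).mulVec ![x 0, y 0] with hu
      have h0 : (M.mulVec u) 0 = (a : ℚ) * u 0 + u 1 := by
        simp [hM, Matrix.mulVec, dotProduct, Fin.sum_univ_two]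
      have h1 : (M.mulVec u) 1 = -u 0 := by
        simp [hM, Matrix.mulVec, dotProduct, Fin.sum_univ_two]
      constructor
      · refine ⟨-⌈(a : ℚ) * x k + y k⌉ + 1 + a * m + n, ?_⟩
        rw [hx k, upperFract, hpow, h0, hm, hn]; push_cast; ring
      · refine ⟨1 - m, ?_⟩
        rw [hy k, hpow, h1, hm]; push_cast; ring
  -- helper: integer difference within bounds forces equality
  have base : x g = x 0 ∧ y g = y 0 := by
    obtain ⟨p, q, hpq⟩ := hfix
    obtain ⟨⟨m, hm⟩, ⟨n, hn⟩⟩ := key g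
    rw [hpq] at hm hn
    simp only [Matrix.cons_val_zero, Matrix.cons_val_one, Matrix.head_cons] at hm hn
    obtain ⟨hx0, hx1⟩ := hx_mem 0
    obtain ⟨hxg0, hxg1⟩ := hx_mem g
    obtain ⟨hy0, hy1⟩ := hy_mem 0
    obtain ⟨hyg0, hyg1⟩ := hy_mem g
    constructor
    · have h : x g - x 0 = ((p + m : ℤ) : ℚ) := by rw [hm]; push_cast; ring
      have hb : (-1 : ℚ) < ((p + m : ℤ) : ℚ) ∧ ((p + m : ℤ) : ℚ) < 1 := by
        constructor <;> [linarith [h]; linarith [h]]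
      have : p + m = 0 := by
        have h1 : (-1 : ℤ) < p + m := by exact_mod_cast hb.1
        have h2 : p + m < 1 := by exact_mod_cast hb.2
        omega
      have := h
      rw [‹p + m = 0›] at this
      push_cast at this
      linarith
    · have h : y g - y 0 = ((q + n : ℤ) : ℚ) := by rw [hn]; push_cast; ring
      have hb1 : ((q + n : ℤ) : ℚ) < 1 := by linarith [h]
      have hb2 : (-1 : ℚ) < ((q + n : ℤ) : ℚ) := by linarith [h]
      have : q + n = 0 := by
        have h1 : (-1 : ℤ) < q + n := by exact_mod_cast hb2
        have h2 : q + n < 1 := by exact_mod_cast hb1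
        omega
      rw [this] at h
      push_cast at h
      linarith
  intro k
  induction k with
  | zero => simpa using base
  | succ k ih =>
    obtain ⟨ihx, ihy⟩ := ih
    constructor
    · rw [show k + 1 + g = (k + g) + 1 from by omega, hx (k + g), hx k, ihx, ihy]
    · rw [show k + 1 + g = (k + g) + 1 from by omega, hy (k + g), hy k, ihx]
end
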